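/- If A ⊆ Y is compact and nonempty, and w*ᵢ → w*₀ weakly* in a weak*-compact base W* of C⁺, then inf_{a∈A} w*ᵢ(a) → inf_{a∈A} w*₀(a). In particular the map w* ↦ inf_{a∈A} w*(a) is weak*-continuous on W* (it is concave and weak* upper semicontinuous, and lower semicontinuity follows from compactness of A). -/

import Mathlib

open Pointwise Set Filter Topology

/-- Scalarization of a set `A ⊆ Y` by a weak-star functional: `inf {w(a) : a ∈ A}` in `EReal`
(with `inf ∅ = +∞`). -/
noncomputable def scal {Y : Type*} [AddCommMonoid Y] [Module ℝ Y] [TopologicalSpace Y]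
    (w : WeakDual ℝ Y) (A : Set Y) : EReal :=
  sInf ((fun a => ((w a : ℝ) : EReal)) '' A)

/-- `F` is `C`-convex. -/
def CConvex {X Y : Type*} [AddCommGroup X] [Module ℝ X] [AddCommGroup Y] [Module ℝ Y]
    (F : X → Set Y) (C : Set Y) : Prop :=
  ∀ x₁ x₂ : X, ∀ t : ℝ, t ∈ Set.Icc (0 : ℝ) 1 →
    t • F x₁ + (1 - t) • F x₂ ⊆ F (t • x₁ + (1 - t) • x₂) + C

/-- Lower Dini directional derivative of `φ : X → EReal` at `x` in direction `d`:
`liminf_{t → 0+} (φ (x + t • d) - φ x) * (1/t)`. -/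
noncomputable def diniX {X : Type*} [AddCommGroup X] [Module ℝ X]
    (φ : X → EReal) (x d : X) : EReal :=
  Filter.liminf (fun t : ℝ => (φ (x + t • d) - φ x) * (((1 : ℝ) / t : ℝ) : EReal))
    (nhdsWithin 0 (Set.Ioi 0))

/-- `scal` as a coercion of the real infimum. -/
lemma scal_eq_coe_aux {Y : Type*} [AddCommMonoid Y] [Module ℝ Y] [TopologicalSpace Y]
    (w : WeakDual ℝ Y) (A : Set Y) (hne : A.Nonempty)
    (hbdd : BddBelow ((fun a => w a) '' A)) :
    scal w A = ((sInf ((fun a => w a) '' A) : ℝ) : EReal) := by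
  have himg : ((fun a => ((w a : ℝ) : EReal)) '' A)
      = (fun x : ℝ => (x : EReal)) '' ((fun a => w a) '' A) := by
    rw [Set.image_image]
  rw [scal, himg,
    ← Monotone.map_csInf_of_continuousAt continuous_coe_real_ereal.continuousAt
      (fun _ _ h => EReal.coe_le_coe_iff.mpr h) (hne.image _) hbdd]

theorem stmt_17 {Y : Type*}
    [AddCommGroup Y] [Module ℝ Y] [TopologicalSpace Y]
    [IsTopologicalAddGroup Y] [ContinuousSMul ℝ Y] [LocallyConvexSpace ℝ Y] [T2Space Y]
    (C : Set Y) (hclosed : IsClosed C) (hconv : Convex ℝ C)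
    (hcone : ∀ c ∈ C, ∀ r : ℝ, 0 ≤ r → r • c ∈ C)
    (hint : (interior C).Nonempty) (hCne : C ≠ Set.univ)
    (Wstar : Set (WeakDual ℝ Y)) (hWcpt : IsCompact Wstar)
    (hWsub : ∀ w ∈ Wstar, ∀ c ∈ C, 0 ≤ w c) (hW0 : (0 : WeakDual ℝ Y) ∉ Wstar)
    (hWbase : ∀ w : WeakDual ℝ Y, (∀ c ∈ C, 0 ≤ w c) → w ≠ 0 →
      ∃ t : ℝ, 0 < t ∧ ∃ w' ∈ Wstar, w = t • w')
    (A : Set Y) (hAcpt : IsCompact A) (hAne : A.Nonempty)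
    {ι : Type*} (l : Filter ι) [l.NeBot] (w : ι → WeakDual ℝ Y) (w₀ : WeakDual ℝ Y)
    (hw : ∀ i, w i ∈ Wstar) (hw₀ : w₀ ∈ Wstar) (hconvw : Filter.Tendsto w l (nhds w₀)) :
    Filter.Tendsto (fun i => scal (w i) A) l (nhds (scal w₀ A)) ∧
      ContinuousOn (fun w' : WeakDual ℝ Y => scal w' A) Wstar := by
  classical
  set f : WeakDual ℝ Y → ℝ := fun w' => sInf ((fun a => w' a) '' A) with hfdef
  have hbdd : ∀ w' : WeakDual ℝ Y, BddBelow ((fun a => w' a) '' A) := fun w' =>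
    (hAcpt.image (map_continuous w')).bddBelow
  have hscal : ∀ w' : WeakDual ℝ Y, scal w' A = ((f w' : ℝ) : EReal) := fun w' =>
    scal_eq_coe_aux w' A hAne (hbdd w')
  -- minimizers
  have hminex : ∀ w' : WeakDual ℝ Y, ∃ a ∈ A, f w' = w' a ∧ ∀ b ∈ A, w' a ≤ w' b := by
    intro w'
    obtain ⟨a, haA, hamin⟩ := hAcpt.exists_isMinOn hAne (map_continuous w').continuousOn
    refine ⟨a, haA, le_antisymm (csInf_le (hbdd w') ⟨a, haA, rfl⟩) ?_,
      fun b hb => isMinOn_iff.mp hamin b hb⟩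
    exact le_csInf (hAne.image _) (by rintro _ ⟨b, hb, rfl⟩; exact isMinOn_iff.mp hamin b hb)
  -- equicontinuity data
  obtain ⟨e, he⟩ := hint
  have hUmem : ((fun y => e + y) ⁻¹' interior C) ∈ 𝓝 (0 : Y) := by
    have : ContinuousAt (fun y : Y => e + y) 0 := (continuous_add_left e).continuousAt
    have := this.preimage_mem_nhds (isOpen_interior.mem_nhds (by simpa using he))
    simpa using this
  obtain ⟨V, ⟨hVmem, hVbal⟩, hVsub⟩ := (nhds_basis_balanced ℝ Y).mem_iff.mp hUmem
  -- uniform bound M on Wstar over V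
  obtain ⟨wm, hwmW, hwmmax⟩ := hWcpt.exists_isMaxOn ⟨w₀, hw₀⟩
    (WeakDual.eval_continuous e).continuousOn
  set M : ℝ := max (wm e) 1 with hMdef
  have hMpos : (0 : ℝ) < M := lt_of_lt_of_le one_pos (le_max_right _ _)
  have hbound : ∀ w' ∈ Wstar, ∀ v ∈ V, |w' v| ≤ M := by
    intro w' hw' v hv
    have heM : w' e ≤ M := le_trans (hwmmax hw') (le_max_left _ _)
    have h1 : 0 ≤ w' (e + v) :=
      hWsub w' hw' _ (interior_subset (hVsub hv))
    have h2 : 0 ≤ w' (e + -v) :=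
      hWsub w' hw' _ (interior_subset (hVsub (hVbal.neg_mem_iff.mpr hv)))
    rw [map_add] at h1 h2
    rw [map_neg] at h2
    refine abs_le.mpr ⟨?_, ?_⟩ <;> linarith
  -- Continuity of f on Wstar
  have hcont : ContinuousOn f Wstar := by
    intro w₁ hw₁
    rw [ContinuousWithinAt, Metric.tendsto_nhds]
    intro ε hε
    set ε' : ℝ := ε / 4 with hε'def
    have hε' : 0 < ε' := by positivity
    set δ : ℝ := ε' / M with hδdef
    have hδ : 0 < δ := by positivity
    -- cover A by finitely many translates of interior (δ • V)
    have hδV : (δ • V : Set Y) ∈ 𝓝 (0 : Y) :=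
      (set_smul_mem_nhds_zero_iff (ne_of_gt hδ)).mpr hVmem
    set U : A → Set Y := fun j => (fun y => y - (j : Y)) ⁻¹' interior (δ • V) with hUdef
    have hUopen : ∀ j, IsOpen (U j) := fun j =>
      isOpen_interior.preimage (continuous_sub_right _)
    have hcover : A ⊆ ⋃ j : A, U j := by
      intro a ha
      exact Set.mem_iUnion.mpr ⟨⟨a, ha⟩, by
        simp only [hUdef, Set.mem_preimage, sub_self]
        exact mem_interior_iff_mem_nhds.mpr hδV⟩
    obtain ⟨t, ht⟩ := hAcpt.elim_finite_subcover U hUopen hcover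
    -- eventual closeness on the finite set t
    have hev : ∀ᶠ w' in 𝓝[Wstar] w₁, w' ∈ Wstar ∧ ∀ j ∈ t, |w' j - w₁ j| < ε' := by
      refine Filter.Eventually.and self_mem_nhdsWithin ?_
      rw [eventually_all_finset]
      intro j hj
      have htd : Filter.Tendsto (fun w' : WeakDual ℝ Y => w' (j : Y)) (𝓝[Wstar] w₁)
          (𝓝 (w₁ (j : Y))) :=
        ((WeakDual.eval_continuous (j : Y)).tendsto w₁).mono_left nhdsWithin_le_nhds
      have := Metric.tendsto_nhds.mp htd ε' hε'
      simpa [Real.dist_eq] using this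
    -- conclude
    filter_upwards [hev] with w' hw'
    obtain ⟨hw'W, hclose⟩ := hw'
    -- pointwise uniform closeness on A
    have hptwise : ∀ a ∈ A, |w' a - w₁ a| ≤ 3 * ε' := by
      intro a ha
      obtain ⟨j, hjt, hjU⟩ := Set.mem_iUnion₂.mp (ht ha)
      have hsub : a - (j : Y) ∈ δ • V := interior_subset hjU
      obtain ⟨v, hvV, hveq⟩ := hsub
      have hval : ∀ g ∈ Wstar, |g (a - (j : Y))| ≤ ε' := by
        intro g hg
        have : g (a - (j : Y)) = δ * g v := by rw [← hveq, map_smul]; rfl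
        rw [this, abs_mul, abs_of_pos hδ]
        calc δ * |g v| ≤ δ * M := by
              have := hbound g hg v hvV
              nlinarith
          _ = ε' := by rw [hδdef, div_mul_cancel₀ _ (ne_of_gt hMpos)]
      have h1 : |w' (a - (j : Y))| ≤ ε' := hval w' hw'W
      have h2 : |w₁ (a - (j : Y))| ≤ ε' := hval w₁ hw₁
      have h3 : |w' (j : Y) - w₁ (j : Y)| < ε' := hclose j hjt
      rw [map_sub] at h1 h2
      have : w' a - w₁ a = (w' a - w' j) + (w' j - w₁ j) + (w₁ j - w₁ a) := by ring
      rw [this]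
      calc |(w' a - w' j) + (w' j - w₁ j) + (w₁ j - w₁ a)|
          ≤ |(w' a - w' j) + (w' j - w₁ j)| + |w₁ j - w₁ a| := abs_add_le _ _
        _ ≤ |w' a - w' j| + |w' j - w₁ j| + |w₁ j - w₁ a| := by
            have := abs_add_le (w' a - w' j) (w' j - w₁ j); linarith
        _ ≤ 3 * ε' := by
            rw [abs_sub_comm (w₁ (j : Y)) (w₁ a)]
            linarith [h1, h2, le_of_lt h3]
    -- infima are close
    obtain ⟨a₀, ha₀A, ha₀eq, ha₀min⟩ := hminex w₁
    obtain ⟨a₁, ha₁A, ha₁eq, ha₁min⟩ := hminex w'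
    have hd1 : f w' - f w₁ ≤ 3 * ε' := by
      have := hptwise a₀ ha₀A
      have hle : f w' ≤ w' a₀ := by rw [ha₁eq]; exact ha₁min a₀ ha₀A
      rw [ha₀eq]
      cases' abs_le.mp this with hl hr
      linarith
    have hd2 : f w₁ - f w' ≤ 3 * ε' := by
      have := hptwise a₁ ha₁A
      have hle : f w₁ ≤ w₁ a₁ := by rw [ha₀eq]; exact ha₀min a₁ ha₁A
      rw [ha₁eq]
      cases' abs_le.mp this with hl hr
      linarith
    rw [Real.dist_eq]
    have : |f w' - f w₁| ≤ 3 * ε' := abs_le.mpr ⟨by linarith, hd1⟩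
    have h34 : 3 * ε' < ε := by rw [hε'def]; linarith
    linarith
  constructor
  · -- Tendsto statement
    have hwl : Filter.Tendsto w l (𝓝[Wstar] w₀) :=
      tendsto_nhdsWithin_of_tendsto_nhds_of_eventually_within w hconvw
        (Filter.Eventually.of_forall hw)
    have hcw : Filter.Tendsto f (𝓝[Wstar] w₀) (𝓝 (f w₀)) := hcont w₀ hw₀
    have hT : Filter.Tendsto (fun i => f (w i)) l (𝓝 (f w₀)) := hcw.comp hwl
    have := (continuous_coe_real_ereal.tendsto (f w₀)).comp hT
    simpa [Function.comp_def, hscal] using this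
  · -- continuity statement
    have : ContinuousOn (fun w' : WeakDual ℝ Y => ((f w' : ℝ) : EReal)) Wstar :=
      continuous_coe_real_ereal.comp_continuousOn hcont
    exact this.congr fun w' _ => hscal w'
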